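/- With the attitude-thrust extraction as above (μ_d ∉ L, u_t = ‖μ_d − g e3‖, Q_d = (η_d, q_d) as defined, and R_d = R(Q_d) the Rodrigues rotation), the extraction equation holds: μ_d = g e3 − u_t R_d^T e3. -/

import Mathlib

open Matrix

noncomputable section

/-- The skew-symmetric (cross-product) matrix `S(x)`, satisfying `S(x) y = x × y`. -/
def sk (x : Fin 3 → ℝ) : Matrix (Fin 3) (Fin 3) ℝ :=
  !![0, -x 2, x 1; x 2, 0, -x 0; -x 1, x 0, 0]

/-- The Euclidean norm of a vector in ℝ³. -/
def vnorm (x : Fin 3 → ℝ) : ℝ := Real.sqrt (x ⬝ᵥ x)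

/-- The Rodrigues map `R(Q) = I + 2 S(q)² - 2 η S(q)`. -/
def rod (η : ℝ) (q : Fin 3 → ℝ) : Matrix (Fin 3) (Fin 3) ℝ :=
  1 + (2 : ℝ) • sk q ^ 2 - (2 * η) • sk q

/-- The third basis vector `e₃ = (0,0,1)`. -/
def e3 : Fin 3 → ℝ := ![0, 0, 1]

/-- The singular set `L = {(0,0,z) : z ≥ g}`. -/
def Lsing (g : ℝ) : Set (Fin 3 → ℝ) := {x | x 0 = 0 ∧ x 1 = 0 ∧ g ≤ x 2}

lemma rodT_mulVec (η : ℝ) (q : Fin 3 → ℝ) :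
    (rod η q)ᵀ.mulVec e3 =
      ![2*q 0*q 2 + 2*η*q 1, 2*q 1*q 2 - 2*η*q 0, 1 - 2*(q 0^2 + q 1^2)] := by
  funext i
  fin_cases i <;>
    simp [rod, sk, e3, Matrix.mulVec, dotProduct, Fin.sum_univ_three,
      Matrix.transpose_apply, pow_two, Matrix.mul_apply, Matrix.one_apply,
      Fin.sum_univ_succ] <;> ring

set_option maxHeartbeats 1600000 in
theorem extraction_equation (g : ℝ) (hg : 0 < g) (μd : Fin 3 → ℝ) (hμ : μd ∉ Lsing g)
    (ut ηd : ℝ) (qd : Fin 3 → ℝ)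
    (hut : ut = vnorm (μd - g • e3))
    (hηd : ηd = Real.sqrt ((1 / 2) * (1 + (g - e3 ⬝ᵥ μd) / vnorm (μd - g • e3))))
    (hqd : qd = (2 * vnorm (μd - g • e3) * ηd)⁻¹ • (sk μd).mulVec e3) :
    μd = g • e3 - ut • (rod ηd qd)ᵀ.mulVec e3 := by
  set a := μd 0 with ha_def
  set b := μd 1 with hb_def
  set c := μd 2 with hc_def
  set n := vnorm (μd - g • e3) with hn_def
  have hvv : (μd - g • e3) ⬝ᵥ (μd - g • e3) = a^2 + b^2 + (c - g)^2 := by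
    simp [dotProduct, Fin.sum_univ_three, e3]
    ring
  have hvvnn : 0 ≤ (μd - g • e3) ⬝ᵥ (μd - g • e3) := by rw [hvv]; positivity
  have hn2 : n^2 = a^2 + b^2 + (c-g)^2 := by
    rw [hn_def, vnorm, Real.sq_sqrt hvvnn, hvv]
  have hpos : 0 < a^2 + b^2 + (c-g)^2 := by
    rcases lt_or_eq_of_le (by positivity : (0:ℝ) ≤ a^2+b^2+(c-g)^2) with h | h
    · exact h
    · exfalso
      have ha : a = 0 := by nlinarith [sq_nonneg a, sq_nonneg b, sq_nonneg (c-g)]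
      have hb : b = 0 := by nlinarith [sq_nonneg a, sq_nonneg b, sq_nonneg (c-g)]
      have hc : c = g := by nlinarith [sq_nonneg a, sq_nonneg b, sq_nonneg (c-g)]
      exact hμ ⟨ha, hb, le_of_eq hc.symm⟩
  have hn0 : 0 < n := by
    rw [hn_def, vnorm]
    exact Real.sqrt_pos.mpr (by rw [hvv]; exact hpos)
  have hle : c - g ≤ n := by nlinarith [hn2, hn0, sq_nonneg a, sq_nonneg b]
  have hstrict : c - g < n := by
    rcases lt_or_eq_of_le hle with h | h
    · exact h
    · exfalso
      have ha : a = 0 := by nlinarith [hn2, sq_nonneg b]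
      have hb : b = 0 := by nlinarith [hn2, sq_nonneg a]
      exact hμ ⟨ha, hb, by nlinarith [hn0]⟩
  have hdot : e3 ⬝ᵥ μd = c := by simp [dotProduct, Fin.sum_univ_three, e3, hc_def]
  have hkey : (1:ℝ)/2 * (1 + (g - c)/n) = (n + g - c)/(2*n) := by
    field_simp; ring
  have hipos : 0 < (n + g - c)/(2*n) := by
    apply div_pos (by linarith) (by linarith)
  have hηd' : ηd = Real.sqrt ((n + g - c)/(2*n)) := by
    rw [hηd, hdot, hkey]
  have hη0 : 0 < ηd := by rw [hηd']; exact Real.sqrt_pos.mpr hipos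
  have hη2 : ηd^2 = (n + g - c)/(2*n) := by
    rw [hηd', Real.sq_sqrt (le_of_lt hipos)]
  have hmv : (sk μd).mulVec e3 = ![b, -a, 0] := by
    funext i
    fin_cases i <;>
      simp [sk, e3, Matrix.mulVec, dotProduct, Fin.sum_univ_three, ha_def, hb_def]
  have hq : qd = ![(2*n*ηd)⁻¹ * b, -((2*n*ηd)⁻¹ * a), 0] := by
    rw [hqd, hmv]
    funext i
    fin_cases i <;> simp <;> ring
  have hne : (2*n*ηd) ≠ 0 := by positivity
  have hdenom : n + g - c ≠ 0 := by linarith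
  rw [hut, hq, rodT_mulVec]
  clear_value a b c n
  clear hvv hvvnn hηd hqd hn_def hηd' hmv hq hut
  funext i
  fin_cases i <;>
    simp only [Pi.sub_apply, Pi.smul_apply, smul_eq_mul, Fin.isValue, Fin.zero_eta,
      Fin.mk_one, Fin.reduceFinMk, e3, Matrix.cons_val_zero, Matrix.cons_val_one, Matrix.head_cons,
      Matrix.cons_val_two, Matrix.tail_cons, ← ha_def, ← hb_def, ← hc_def]
  · field_simp; ring
  · field_simp; ring
  · have hη2' : 2*n*ηd^2 = n+g-c := by rw [hη2]; field_simp
    field_simp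
    linear_combination (c-g+n)*hη2' + hn2

end
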